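/- Let X be a set, h : X → ℝ, and G act on X with |(h(g·x) − h(g·y)) − (h(x) − h(y))| ≤ B for all g, x, y. If there exists g ∈ G and a ∈ X with h(gⁿ·a) → +∞ as n → +∞, then the homogenization μʰ of μ(g) := h(g·a) − h(a) is a nonzero homogeneous quasimorphism on G. -/

import Mathlib

open Filter

theorem stmt_5 {G X : Type*} [Group G] [MulAction G X] (h : X → ℝ) (B : ℝ)
    (hbound : ∀ (g : G) (x y : X), |(h (g • x) - h (g • y)) - (h x - h y)| ≤ B)
    (a : X) (g₀ : G)
    (hdiv : Tendsto (fun n : ℕ => h (g₀ ^ n • a)) atTop atTop)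
    (μh : G → ℝ)
    (hlim : ∀ g : G, Tendsto (fun n : ℕ => (h (g ^ n • a) - h a) / n) atTop (nhds (μh g))) :
    μh ≠ 0 ∧ (∀ (g : G) (n : ℤ), μh (g ^ n) = n * μh g) ∧
      (∃ C : ℝ, ∀ x y : G, |μh (x * y) - μh x - μh y| ≤ C) := by
  set μ : G → ℝ := fun g => h (g • a) - h a with hμdef
  have hB0 : 0 ≤ B := le_trans (abs_nonneg _) (hbound 1 a a)
  have hμ1 : μ 1 = 0 := by simp [hμdef]
  have hdef : ∀ x y : G, |μ (x * y) - μ x - μ y| ≤ B := by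
    intro x y
    have key : μ (x * y) - μ x - μ y
        = (h (x • (y • a)) - h (x • a)) - (h (y • a) - h a) := by
      simp only [hμdef, mul_smul]; ring
    rw [key]
    exact hbound x (y • a) a
  -- bound on powers
  have hpow : ∀ (g : G) (n : ℕ), |μ (g ^ (n + 1)) - ((n : ℝ) + 1) * μ g| ≤ (n : ℝ) * B := by
    intro g n
    induction n with
    | zero => simp
    | succ n ih =>
      push_cast
      have h1 := hdef (g ^ (n + 1)) g
      have key : μ (g ^ (n + 1 + 1)) - ((n : ℝ) + 1 + 1) * μ g
          = (μ (g ^ (n + 1) * g) - μ (g ^ (n + 1)) - μ g)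
            + (μ (g ^ (n + 1)) - ((n : ℝ) + 1) * μ g) := by
        rw [← pow_succ]; push_cast; ring
      calc |μ (g ^ (n + 1 + 1)) - ((n : ℝ) + 1 + 1) * μ g|
          ≤ |μ (g ^ (n + 1) * g) - μ (g ^ (n + 1)) - μ g|
            + |μ (g ^ (n + 1)) - ((n : ℝ) + 1) * μ g| := by rw [key]; exact abs_add_le _ _
        _ ≤ B + (n : ℝ) * B := add_le_add h1 ih
        _ = ((n : ℝ) + 1) * B := by ring
  have hlim' : ∀ g : G, Tendsto (fun n : ℕ => μ (g ^ n) / n) atTop (nhds (μh g)) := by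
    intro g; exact hlim g
  -- μh is close to μ
  have hclose : ∀ g : G, |μh g - μ g| ≤ B := by
    intro g
    have ht : Tendsto (fun n : ℕ => |μ (g ^ n) / n - μ g|) atTop (nhds |μh g - μ g|) :=
      ((hlim' g).sub_const _).abs
    apply le_of_tendsto ht
    filter_upwards [eventually_ge_atTop 1] with n hn
    obtain ⟨m, rfl⟩ : ∃ m, n = m + 1 := ⟨n - 1, (Nat.succ_pred_eq_of_pos hn).symm⟩
    have hm1 : (0 : ℝ) < (m : ℝ) + 1 := by positivity
    have key : μ (g ^ (m + 1)) / ((m : ℕ) + 1 : ℕ) - μ g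
        = (μ (g ^ (m + 1)) - ((m : ℝ) + 1) * μ g) / ((m : ℝ) + 1) := by
      push_cast; field_simp
    rw [key, abs_div, abs_of_pos hm1, div_le_iff₀ hm1]
    nlinarith [hpow g m]
  -- homogeneity over ℕ
  have hnat : ∀ (g : G) (m : ℕ), μh (g ^ m) = (m : ℝ) * μh g := by
    intro g m
    rcases Nat.eq_zero_or_pos m with rfl | hm
    · have h0 : Tendsto (fun n : ℕ => μ ((g ^ 0) ^ n) / n) atTop (nhds 0) := by
        have : (fun n : ℕ => μ ((g ^ 0) ^ n) / n) = fun _ => 0 := by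
          funext n; simp [hμdef]
        rw [this]; exact tendsto_const_nhds
      have := tendsto_nhds_unique (hlim' (g ^ 0)) h0
      simpa using this
    · have hmn : Tendsto (fun n : ℕ => m * n) atTop atTop :=
        tendsto_atTop_mono (fun n => Nat.le_mul_of_pos_left n hm) tendsto_id
      have h1 : Tendsto (fun n : ℕ => (m : ℝ) * (μ (g ^ (m * n)) / (m * n : ℕ)))
          atTop (nhds ((m : ℝ) * μh g)) := ((hlim' g).comp hmn).const_mul (m:ℝ)
      have h2 : Tendsto (fun n : ℕ => μ ((g ^ m) ^ n) / n) atTop (nhds ((m : ℝ) * μh g)) := by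
        apply h1.congr'
        filter_upwards [eventually_ge_atTop 1] with n hn
        rw [← pow_mul]
        have hn0 : (n : ℝ) ≠ 0 := by positivity
        have hm0 : (m : ℝ) ≠ 0 := by positivity
        push_cast
        field_simp
      exact tendsto_nhds_unique (hlim' (g ^ m)) h2
  -- inverses
  have hinv : ∀ g : G, μh g⁻¹ = -μh g := by
    intro g
    have hb : ∀ n : ℕ, |μ ((g⁻¹) ^ n) + μ (g ^ n)| ≤ B := by
      intro n
      have h0 := hdef (g ^ n) ((g⁻¹) ^ n)
      have he : g ^ n * (g⁻¹) ^ n = 1 := by rw [inv_pow, mul_inv_cancel]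
      rw [he, hμ1] at h0
      rw [show μ ((g⁻¹) ^ n) + μ (g ^ n) = -(0 - μ (g ^ n) - μ ((g⁻¹) ^ n)) by ring, abs_neg]
      exact h0
    have hsum : Tendsto (fun n : ℕ => μ ((g⁻¹) ^ n) / n + μ (g ^ n) / n) atTop
        (nhds (μh g⁻¹ + μh g)) := (hlim' g⁻¹).add (hlim' g)
    have hzero : Tendsto (fun n : ℕ => μ ((g⁻¹) ^ n) / n + μ (g ^ n) / n) atTop (nhds 0) := by
      apply squeeze_zero_norm' (a := fun n : ℕ => B / n)
      · filter_upwards [eventually_ge_atTop 1] with n hn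
        have hn0 : (0 : ℝ) < n := by positivity
        rw [Real.norm_eq_abs, ← add_div]
        rw [abs_div, abs_of_pos hn0, div_le_div_iff_of_pos_right hn0]
        exact hb n
      · exact tendsto_const_div_atTop_nhds_zero_nat B
    have := tendsto_nhds_unique hsum hzero
    linarith
  -- homogeneity over ℤ
  have hzpow : ∀ (g : G) (n : ℤ), μh (g ^ n) = (n : ℝ) * μh g := by
    intro g n
    cases n with
    | ofNat m => simpa using hnat g m
    | negSucc m =>
      rw [zpow_negSucc, hinv, hnat]
      push_cast
      ring
  refine ⟨?_, hzpow, ⟨4 * B, ?_⟩⟩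
  · -- nonzero
    obtain ⟨k, hk⟩ := ((hdiv.eventually_ge_atTop (h a + B + 1)).and (eventually_ge_atTop 1)).exists
    obtain ⟨hk1, hk2⟩ := hk
    intro heq
    have hμh0 : μh (g₀ ^ k) = 0 := by
      rw [hnat, show μh g₀ = 0 from congrFun heq g₀, mul_zero]
    have h3 := hclose (g₀ ^ k)
    rw [hμh0] at h3
    have h4 : μ (g₀ ^ k) ≥ B + 1 := by
      simp only [hμdef]; linarith
    have := abs_le.mp h3
    linarith [this.1]
  · -- quasimorphism bound
    intro x y
    have h1 := abs_le.mp (hclose (x * y))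
    have h2 := abs_le.mp (hclose x)
    have h3 := abs_le.mp (hclose y)
    have h4 := abs_le.mp (hdef x y)
    rw [abs_le]
    constructor <;> [linarith [h1.1, h2.2, h3.2, h4.1]; linarith [h1.2, h2.1, h3.1, h4.2]]
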